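/- Let (G, M, val) be a finite numerical dataset, θ ∈ ℕ, and C the linearly ordered set of tolerance blocks of W = range(val) (each identified with its convex hull interval). Let (G, M, C, Y) be the TriMax scaled context with (g, m, c) ∈ Y ⟺ val(g,m) ∈ c. If (A, B, U) is a triadic concept of this context with |U| = 1, then (A, B) is a maximal bicluster of similar values for θ. -/

import Mathlib

/-- Any pairwise-similar subset of `W` extends to a maximal pairwise-similar subset. -/
lemma extend_block (W : Finset ℤ) (θ : ℕ) (S : Finset ℤ) (hSW : S ⊆ W)
    (hSp : ∀ w₁ ∈ S, ∀ w₂ ∈ S, |w₁ - w₂| ≤ (θ : ℤ)) :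
    ∃ V : Finset ℤ, S ⊆ V ∧ V ⊆ W ∧
      (∀ w₁ ∈ V, ∀ w₂ ∈ V, |w₁ - w₂| ≤ (θ : ℤ)) ∧
      (∀ V' : Finset ℤ, V' ⊆ W → (∀ w₁ ∈ V', ∀ w₂ ∈ V', |w₁ - w₂| ≤ (θ : ℤ)) →
        V ⊆ V' → V = V') := by
  classical
  set T := W.powerset.filter
    (fun V => S ⊆ V ∧ ∀ w₁ ∈ V, ∀ w₂ ∈ V, |w₁ - w₂| ≤ (θ : ℤ)) with hT
  have hST : S ∈ T := by
    simp only [hT, Finset.mem_filter, Finset.mem_powerset]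
    exact ⟨hSW, subset_refl S, hSp⟩
  obtain ⟨V, hVT, hVmax⟩ := T.exists_maximal ⟨S, hST⟩
  simp only [hT, Finset.mem_filter, Finset.mem_powerset] at hVT
  refine ⟨V, hVT.2.1, hVT.1, hVT.2.2, ?_⟩
  intro V' hV'W hV'p hVV'
  by_contra hne
  have hmem : V' ∈ T := by
    simp only [hT, Finset.mem_filter, Finset.mem_powerset]
    exact ⟨hV'W, hVT.2.1.trans hVV', hV'p⟩
  exact hne (le_antisymm hVV' (hVmax hmem hVV'))


/-- In the TriMax scaled context (conditions = tolerance blocks of the value set,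
identified with their convex hulls), a triadic concept whose modus is a singleton
yields a maximal bicluster of similar values for `θ`. -/
theorem trimax_singleton_modus_maximal_bicluster
    {G M : Type*} [Fintype G] [Fintype M] (val : G × M → ℤ) (θ : ℕ)
    (A : Set G) (B : Set M) (U : Set (Finset ℤ)) :
    let W : Finset ℤ := (Finset.univ : Finset (G × M)).image val
    -- tolerance blocks of W (maximal pairwise-similar subsets)
    let C : Set (Finset ℤ) := {V | V ⊆ W ∧ V.Nonempty ∧
      (∀ w₁ ∈ V, ∀ w₂ ∈ V, |w₁ - w₂| ≤ (θ : ℤ)) ∧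
      (∀ V' : Finset ℤ, V' ⊆ W → (∀ w₁ ∈ V', ∀ w₂ ∈ V', |w₁ - w₂| ≤ (θ : ℤ)) →
        V ⊆ V' → V = V')}
    -- incidence: val(g,m) lies in the convex hull of the block c
    let inc : G → M → Finset ℤ → Prop := fun g m c =>
      ∃ a ∈ c, ∃ b ∈ c, a ≤ val (g, m) ∧ val (g, m) ≤ b
    let bicluster : Set G → Set M → Prop := fun A' B' =>
      ∀ g ∈ A', ∀ h ∈ A', ∀ m ∈ B', ∀ n ∈ B', |val (g, m) - val (h, n)| ≤ (θ : ℤ)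
    -- (A, B, U) is a triadic concept of (G, M, C, Y)
    (U ⊆ C) →
    (∀ g ∈ A, ∀ m ∈ B, ∀ c ∈ U, inc g m c) →
    (∀ (A' : Set G) (B' : Set M) (U' : Set (Finset ℤ)), U' ⊆ C →
      (∀ g ∈ A', ∀ m ∈ B', ∀ c ∈ U', inc g m c) →
      A ⊆ A' → B ⊆ B' → U ⊆ U' → A = A' ∧ B = B' ∧ U = U') →
    -- the modus is a singleton
    (∃ c, U = {c}) →
    bicluster A B ∧ (∀ g ∉ A, ¬ bicluster (insert g A) B) ∧
      (∀ m ∉ B, ¬ bicluster A (insert m B)) := by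
  intro W C inc bicluster hUC hInc hMax hU
  classical
  obtain ⟨c, rfl⟩ := hU
  have hcC : c ∈ C := hUC (Set.mem_singleton c)
  obtain ⟨hcW, hcne, hcpair, hcmax⟩ := hcC
  have hbi : bicluster A B := by
    intro g hg h hh m hm n hn
    obtain ⟨a₁, ha₁, b₁, hb₁, h1, h2⟩ := hInc g hg m hm c (Set.mem_singleton c)
    obtain ⟨a₂, ha₂, b₂, hb₂, h3, h4⟩ := hInc h hh n hn c (Set.mem_singleton c)
    have e1 := hcpair b₁ hb₁ a₂ ha₂
    have e2 := hcpair b₂ hb₂ a₁ ha₁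
    rw [abs_sub_le_iff] at e1 e2 ⊢
    omega
  have main : ∀ (A' : Set G) (B' : Set M), A ⊆ A' → B ⊆ B' →
      A'.Nonempty → B'.Nonempty → bicluster A' B' → A = A' ∧ B = B' := by
    intro A' B' hAA hBB hA'ne hB'ne hbic
    obtain ⟨g₀, hg₀⟩ := hA'ne
    obtain ⟨m₀, hm₀⟩ := hB'ne
    set S : Finset ℤ := W.filter (fun w => ∃ g' ∈ A', ∃ m' ∈ B', val (g', m') = w) with hS
    have hSW : S ⊆ W := Finset.filter_subset _ _
    have hmemS : ∀ g' ∈ A', ∀ m' ∈ B', val (g', m') ∈ S := by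
      intro g' hg' m' hm'
      simp only [hS, Finset.mem_filter]
      exact ⟨Finset.mem_image_of_mem val (Finset.mem_univ _), g', hg', m', hm', rfl⟩
    have hSp : ∀ w₁ ∈ S, ∀ w₂ ∈ S, |w₁ - w₂| ≤ (θ : ℤ) := by
      intro w₁ h₁ w₂ h₂
      simp only [hS, Finset.mem_filter] at h₁ h₂
      obtain ⟨-, g₁, hg₁, m₁, hm₁, rfl⟩ := h₁
      obtain ⟨-, g₂, hg₂, m₂, hm₂, rfl⟩ := h₂
      exact hbic g₁ hg₁ g₂ hg₂ m₁ hm₁ m₂ hm₂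
    obtain ⟨V, hSV, hVW, hVp, hVmax⟩ := extend_block W θ S hSW hSp
    have hVne : V.Nonempty := ⟨val (g₀, m₀), hSV (hmemS g₀ hg₀ m₀ hm₀)⟩
    have hVC : V ∈ C := ⟨hVW, hVne, hVp, hVmax⟩
    have hVc : V = c := by
      have h1 := hMax A B ({c, V} : Set (Finset ℤ)) ?_ ?_ subset_rfl subset_rfl ?_
      · have hVmem : V ∈ ({c, V} : Set (Finset ℤ)) := Set.mem_insert_iff.mpr
          (Or.inr (Set.mem_singleton V))
        rw [← h1.2.2] at hVmem
        exact Set.mem_singleton_iff.mp hVmem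
      · intro x hx
        rcases Set.mem_insert_iff.mp hx with rfl | hx'
        · exact ⟨hcW, hcne, hcpair, hcmax⟩
        · rw [Set.mem_singleton_iff] at hx'; subst hx'; exact hVC
      · intro g hg m hm c' hc'
        rcases Set.mem_insert_iff.mp hc' with rfl | hc''
        · exact hInc g hg m hm c' (Set.mem_singleton _)
        · rw [Set.mem_singleton_iff] at hc''; subst hc''
          exact ⟨val (g, m), hSV (hmemS g (hAA hg) m (hBB hm)),
            val (g, m), hSV (hmemS g (hAA hg) m (hBB hm)), le_refl _, le_refl _⟩
      · intro x hx
        rw [Set.mem_singleton_iff] at hx; subst hx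
        exact Set.mem_insert _ _
    have h2 := hMax A' B' {c} hUC ?_ hAA hBB subset_rfl
    · exact ⟨h2.1, h2.2.1⟩
    · intro g hg m hm c' hc'
      rw [Set.mem_singleton_iff] at hc'; subst hc'
      have hv : val (g, m) ∈ c' := hVc ▸ hSV (hmemS g hg m hm)
      exact ⟨val (g, m), hv, val (g, m), hv, le_refl _, le_refl _⟩
  refine ⟨hbi, ?_, ?_⟩
  · intro g hg hbic
    by_cases hB : B.Nonempty
    · obtain ⟨m₀, hm₀⟩ := hB
      have h := (main (insert g A) B (Set.subset_insert g A) subset_rfl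
        ⟨g, Set.mem_insert g A⟩ ⟨m₀, hm₀⟩ hbic).1
      exact hg (by rw [h]; exact Set.mem_insert g A)
    · have hBe : B = ∅ := Set.not_nonempty_iff_eq_empty.mp hB
      have h := hMax Set.univ B {c} hUC
        (by intro g' hg' m hm; rw [hBe] at hm; exact absurd hm (Set.notMem_empty m))
        (Set.subset_univ A) subset_rfl subset_rfl
      exact hg (by rw [h.1]; exact Set.mem_univ g)
  · intro m hm hbic
    by_cases hA : A.Nonempty
    · obtain ⟨g₀, hg₀⟩ := hA
      have h := (main A (insert m B) subset_rfl (Set.subset_insert m B)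
        ⟨g₀, hg₀⟩ ⟨m, Set.mem_insert m B⟩ hbic).2
      exact hm (by rw [h]; exact Set.mem_insert m B)
    · have hAe : A = ∅ := Set.not_nonempty_iff_eq_empty.mp hA
      have h := hMax A Set.univ {c} hUC
        (by intro g' hg' m' hm'; rw [hAe] at hg'; exact absurd hg' (Set.notMem_empty g'))
        subset_rfl (Set.subset_univ B) subset_rfl
      exact hm (by rw [h.2.1]; exact Set.mem_univ m)
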